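/- For every prime p with p ≥ 5, the central binomial coefficient satisfies (2p choose p) ≡ 2 (mod p^3). -/

import Mathlib

open Finset

lemma choose_sub_one_sq (p : ℕ) (hp : p.Prime) : ∀ j, j ≤ p - 1 →
    ((Nat.choose (p-1) j : ZMod p))^2 = 1 := by
  have hp1 : 1 ≤ p := hp.one_lt.le
  intro j
  induction j with
  | zero => simp
  | succ n ih =>
    intro hj
    have hn := ih (by omega)
    have hpas : Nat.choose (p-1) n + Nat.choose (p-1) (n+1) = Nat.choose p (n+1) := by
      have : p = (p-1) + 1 := by omega
      rw [this, Nat.choose_succ_succ]; simp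
    have hdvd : p ∣ Nat.choose p (n+1) := hp.dvd_choose_self (by omega) (by omega)
    have h0 : ((Nat.choose p (n+1) : ℕ) : ZMod p) = 0 :=
      (ZMod.natCast_eq_zero_iff _ _).mpr hdvd
    have h1 : ((Nat.choose (p-1) n : ZMod p)) + (Nat.choose (p-1) (n+1) : ZMod p) = 0 := by
      rw [← Nat.cast_add, hpas, h0]
    have hneg : ((Nat.choose (p-1) (n+1) : ZMod p)) = -(Nat.choose (p-1) n : ZMod p) := by
      linear_combination h1
    rw [hneg, neg_sq, hn]

lemma sum_range_zmod (p : ℕ) [NeZero p] (f : ZMod p → ZMod p) :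
    ∑ k ∈ range p, f (k : ZMod p) = ∑ x : ZMod p, f x := by
  refine Finset.sum_nbij' (fun k => (k : ZMod p)) (fun x => x.val) ?_ ?_ ?_ ?_ ?_
  · intro a _; exact Finset.mem_univ _
  · intro a _; simp [ZMod.val_lt]
  · intro a ha; simp only [mem_range] at ha; exact ZMod.val_cast_of_lt ha
  · intro a _; simp
  · intro a _; rfl

theorem wolstenholme (p : ℕ) (hp : p.Prime) (h5 : 5 ≤ p) :
    (p : ℤ)^3 ∣ (Nat.choose (2 * p) p : ℤ) - 2 := by
  haveI : Fact p.Prime := ⟨hp⟩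
  set c : ℕ → ℕ := fun k => Nat.choose p k / p with hcdef
  have hchoose : ∀ k, 1 ≤ k → k < p → Nat.choose p k = p * c k := by
    intro k h1 h2
    exact (Nat.mul_div_cancel' (hp.dvd_choose_self (by omega) h2)).symm
  -- Vandermonde
  have hV : Nat.choose (2*p) p = ∑ k ∈ range (p+1), (Nat.choose p k)^2 := by
    rw [two_mul, Nat.add_choose_eq, Finset.Nat.sum_antidiagonal_eq_sum_range_succ_mk]
    refine Finset.sum_congr rfl fun k hk => ?_
    simp only [Finset.mem_range] at hk
    rw [sq, Nat.choose_symm (by omega : k ≤ p)]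
  have hsplit : Nat.choose (2*p) p = 2 + ∑ k ∈ Ico 1 p, (Nat.choose p k)^2 := by
    rw [hV, Finset.sum_range_succ, Finset.range_eq_Ico,
      Finset.sum_eq_sum_Ico_succ_bot (by omega : 0 < p)]
    simp [Nat.choose_self, Nat.choose_zero_right]; ring
  have hsum : ∑ k ∈ Ico 1 p, (Nat.choose p k)^2 = p^2 * ∑ k ∈ Ico 1 p, (c k)^2 := by
    rw [Finset.mul_sum]
    refine Finset.sum_congr rfl fun k hk => ?_
    simp only [Finset.mem_Ico] at hk
    rw [hchoose k hk.1 hk.2, mul_pow]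
  -- key congruence
  have hkey : ∀ k, 1 ≤ k → k < p → ((c k : ZMod p))^2 = ((k : ZMod p)⁻¹)^2 := by
    intro k h1 h2
    have hid : p * Nat.choose (p-1) (k-1) = Nat.choose p k * k := by
      have := Nat.add_one_mul_choose_eq (p-1) (k-1)
      have e1 : p - 1 + 1 = p := by omega
      have e2 : k - 1 + 1 = k := by omega
      rwa [e1, e2] at this
    have hid2 : Nat.choose (p-1) (k-1) = c k * k := by
      have : p * Nat.choose (p-1) (k-1) = p * (c k * k) := by
        rw [hid, hchoose k h1 h2]; ring
      exact Nat.eq_of_mul_eq_mul_left (by omega) this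
    have hsq : ((c k : ZMod p) * (k : ZMod p))^2 = 1 := by
      have := choose_sub_one_sq p hp (k-1) (by omega)
      rw [hid2] at this; push_cast at this
      linear_combination this
    have hk0 : ((k : ZMod p)) ≠ 0 := by
      rw [Ne, ZMod.natCast_eq_zero_iff]
      exact fun h => absurd (Nat.le_of_dvd (by omega) h) (by omega)
    have : ((c k : ZMod p))^2 * ((k : ZMod p))^2 = 1 := by rw [← mul_pow]; exact hsq
    rw [inv_pow]
    exact eq_inv_of_mul_eq_one_left (by rw [mul_comm]; linear_combination this)
  -- the sum of c k squared is divisible by p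
  have hdvdsum : p ∣ ∑ k ∈ Ico 1 p, (c k)^2 := by
    rw [← ZMod.natCast_eq_zero_iff]
    push_cast
    have h1 : ∑ k ∈ Ico 1 p, ((c k : ZMod p))^2 = ∑ k ∈ Ico 1 p, ((k : ZMod p)⁻¹)^2 := by
      refine Finset.sum_congr rfl fun k hk => ?_
      simp only [Finset.mem_Ico] at hk
      exact hkey k hk.1 hk.2
    rw [h1]
    have h2 : ∑ k ∈ Ico 1 p, ((k : ZMod p)⁻¹)^2 = ∑ k ∈ range p, ((k : ZMod p)⁻¹)^2 := by
      rw [Finset.range_eq_Ico, Finset.sum_eq_sum_Ico_succ_bot (by omega : 0 < p)]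
      simp
    rw [h2, sum_range_zmod p (fun x => (x⁻¹)^2)]
    have h3 : ∑ x : ZMod p, (x⁻¹)^2 = ∑ x : ZMod p, x^2 :=
      Fintype.sum_bijective (·⁻¹) (Function.Involutive.bijective inv_inv) _ _ (fun x => rfl)
    rw [h3]
    apply FiniteField.sum_pow_lt_card_sub_one
    rw [ZMod.card]; omega
  obtain ⟨m, hm⟩ := hdvdsum
  refine ⟨(m : ℤ), ?_⟩
  have : (Nat.choose (2*p) p : ℤ) = 2 + (p:ℤ)^2 * ((∑ k ∈ Ico 1 p, (c k)^2 : ℕ) : ℤ) := by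
    rw [hsplit, hsum]; push_cast; ring
  rw [this, hm]; push_cast; ring
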